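/- Let f : 𝕋 → ℝ be continuous, even, with mean value zero, with Fourier coefficients satisfying f̂(k) ≥ 0 for all k ≠ 0 and ∑_{k∈ℤ} f̂(k) < ∞, and let (x_n)_{n≥1} be a greedy sequence for f with initial points x_1, …, x_M. Then there is a constant C ≥ 0, depending only on the initial points and f, such that for every k ≠ 0 with f̂(k) > 0 and every n ≥ M, |∑_{m=1}^{n} e^{2πik x_m}|² ≤ (n·f(0) + C)/f̂(k). -/

import Mathlib

open MeasureTheory Filter

/-- For continuous even mean-zero `f : 𝕋 → ℝ` with summable Fourier
coefficients, `f̂(k) ≥ 0` for `k ≠ 0`, and a greedy sequence `(x_n)` for `f`, there is a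
constant `C ≥ 0` such that for every `k ≠ 0` with `f̂(k) > 0` and every `n ≥ M`,
`|∑_{m=1}^{n} e^{2πik x_m}|² ≤ (n·f(0) + C)/f̂(k)`. -/
theorem exponential_sum_bound
    (f : UnitAddCircle → ℝ) (hf_cont : Continuous f)
    (hf_even : ∀ t : UnitAddCircle, f (-t) = f t)
    (hf_mean : (∫ t : UnitAddCircle, f t) = 0)
    (hf_sum : Summable fun k : ℤ => ‖fourierCoeff (fun t => (f t : ℂ)) k‖)
    (hf_pos : ∀ k : ℤ, k ≠ 0 → 0 ≤ (fourierCoeff (fun t => (f t : ℂ)) k).re)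
    (M : ℕ) (hM : 1 ≤ M) (x : ℕ → UnitAddCircle)
    (hgreedy : ∀ n : ℕ, M < n → ∀ y : UnitAddCircle,
      ∑ k ∈ Finset.Icc 1 (n - 1), f (x n - x k) ≤ ∑ k ∈ Finset.Icc 1 (n - 1), f (y - x k)) :
    ∃ C : ℝ, 0 ≤ C ∧ ∀ k : ℤ, k ≠ 0 → 0 < (fourierCoeff (fun t => (f t : ℂ)) k).re →
      ∀ n : ℕ, M ≤ n →
        ‖∑ m ∈ Finset.Icc 1 n, fourier k (x m)‖ ^ 2
          ≤ ((n : ℝ) * f 0 + C) / (fourierCoeff (fun t => (f t : ℂ)) k).re := by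
  classical
  set c : ℤ → ℂ := fourierCoeff (fun t => (f t : ℂ)) with hc
  have haar_eq : (AddCircle.haarAddCircle : Measure UnitAddCircle) = volume := by
    rw [AddCircle.volume_eq_smul_haarAddCircle]; simp
  -- multiplicativity of `fourier k` in the point variable
  have fourier_sub : ∀ (k : ℤ) (a b : UnitAddCircle),
      fourier k (a - b) = fourier k a * (starRingEnd ℂ) (fourier k b) := by
    intro k a b
    rw [← fourier_neg (n := k) (x := b), fourier_apply, fourier_apply, fourier_apply]
    have h : k • (a - b) = k • a + (-k) • b := by rw [smul_sub, neg_smul, sub_eq_add_neg]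
    rw [h, AddCircle.toCircle_add]; push_cast; ring
  -- the zeroth Fourier coefficient vanishes
  have hc0 : c 0 = 0 := by
    have h1 : c 0 = ∫ t : UnitAddCircle, ((f t : ℂ)) ∂AddCircle.haarAddCircle := by
      rw [hc]
      show (∫ t : UnitAddCircle, fourier (-(0:ℤ)) t • ((f t : ℂ)) ∂AddCircle.haarAddCircle) = _
      congr 1
      ext t
      rw [neg_zero, fourier_zero, one_smul]
    have h2 := integral_ofReal (𝕜 := ℂ) (f := f) (μ := (volume : Measure UnitAddCircle))
    rw [hf_mean] at h2
    rw [h1, haar_eq]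
    exact h2.trans (by norm_num)
  -- pointwise convergence of the Fourier series
  have hFc : Continuous fun t : UnitAddCircle => (f t : ℂ) :=
    Complex.continuous_ofReal.comp hf_cont
  have hpt : ∀ t : UnitAddCircle, HasSum (fun k : ℤ => c k * fourier k t) ((f t : ℂ)) := by
    intro t
    have h := has_pointwise_sum_fourier_series_of_summable
      (f := (⟨fun t => (f t : ℂ), hFc⟩ : C(UnitAddCircle, ℂ))) (Summable.of_norm hf_sum) t
    simpa [smul_eq_mul] using h
  -- energy lower bound by a single Fourier mode
  have key : ∀ (n : ℕ) (k : ℤ),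
      (c k).re * ‖∑ m ∈ Finset.Icc 1 n, fourier k (x m)‖ ^ 2
        ≤ ∑ m ∈ Finset.Icc 1 n, ∑ l ∈ Finset.Icc 1 n, f (x m - x l) := by
    intro n k0
    set s := Finset.Icc 1 n with hs
    set S : ℤ → ℂ := fun k => ∑ m ∈ s, fourier k (x m) with hS
    have h1 : HasSum (fun k : ℤ => ∑ m ∈ s, ∑ l ∈ s, c k * fourier k (x m - x l))
        (∑ m ∈ s, ∑ l ∈ s, ((f (x m - x l) : ℂ))) :=
      hasSum_sum fun m _ => hasSum_sum fun l _ => hpt (x m - x l)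
    have h2 : ∀ k : ℤ, ∑ m ∈ s, ∑ l ∈ s, c k * fourier k (x m - x l)
        = c k * ((‖S k‖ : ℂ)) ^ 2 := by
      intro k
      calc ∑ m ∈ s, ∑ l ∈ s, c k * fourier k (x m - x l)
          = c k * ∑ m ∈ s, ∑ l ∈ s, fourier k (x m) * (starRingEnd ℂ) (fourier k (x l)) := by
            simp_rw [fourier_sub, Finset.mul_sum]
        _ = c k * (S k * (starRingEnd ℂ) (S k)) := by
            rw [hS]; congr 1
            rw [map_sum, Finset.sum_mul_sum]
        _ = c k * ((‖S k‖ : ℂ)) ^ 2 := by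
            rw [Complex.mul_conj]
            congr 1
            rw [Complex.normSq_eq_norm_sq]
            push_cast
            ring
    simp_rw [h2] at h1
    have h3 : HasSum (fun k : ℤ => (c k).re * ‖S k‖ ^ 2)
        (∑ m ∈ s, ∑ l ∈ s, f (x m - x l)) := by
      have h4 := h1.mapL Complex.reCLM
      convert h4 using 1
      · funext k
        simp [← Complex.ofReal_pow, Complex.mul_re]
      · simp [map_sum]
    have h5 : (c k0).re * ‖S k0‖ ^ 2 ≤ ∑ m ∈ s, ∑ l ∈ s, f (x m - x l) := by
      refine le_hasSum h3 k0 fun j hj => ?_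
      by_cases hj0 : j = 0
      · subst hj0; rw [hc0]; simp
      · exact mul_nonneg (hf_pos j hj0) (by positivity)
    exact h5
  -- energy of the first n points
  set E : ℕ → ℝ := fun n => ∑ m ∈ Finset.Icc 1 n, ∑ l ∈ Finset.Icc 1 n, f (x m - x l) with hE
  -- greedy step produces nonpositive interaction
  have hD : ∀ n : ℕ, M ≤ n → ∑ kk ∈ Finset.Icc 1 n, f (x (n+1) - x kk) ≤ 0 := by
    intro n hn
    have hex : ∃ y : UnitAddCircle, ∑ kk ∈ Finset.Icc 1 n, f (y - x kk) ≤ 0 := by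
      by_contra hcon
      push_neg at hcon
      set g : UnitAddCircle → ℝ := fun y => ∑ kk ∈ Finset.Icc 1 n, f (y - x kk) with hg
      have hterm : ∀ i : ℕ, Continuous fun y : UnitAddCircle => f (y - x i) := fun i =>
        hf_cont.comp (continuous_id.sub continuous_const)
      have hgc : Continuous g := continuous_finset_sum _ fun i _ => hterm i
      have hgi : Integrable g := hgc.integrable_of_hasCompactSupport
        (HasCompactSupport.of_compactSpace _)
      have hzero : (∫ y : UnitAddCircle, g y) = 0 := by
        rw [hg]
        rw [integral_finset_sum _ fun i _ => (hterm i).integrable_of_hasCompactSupport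
          (HasCompactSupport.of_compactSpace _)]
        have : ∀ i ∈ Finset.Icc 1 n,
            (∫ y : UnitAddCircle, f (y - x i)) = (0 : ℝ) := by
          intro i _
          rw [integral_sub_right_eq_self f (x i), hf_mean]
        rw [Finset.sum_congr rfl this, Finset.sum_const, smul_zero]
      have hpos : 0 < ∫ y : UnitAddCircle, g y := by
        rw [integral_pos_iff_support_of_nonneg (fun y => (hcon y).le) hgi]
        have hsupp : Function.support g = Set.univ :=
          Set.eq_univ_of_forall fun y => (hcon y).ne'
        rw [hsupp, AddCircle.volume_eq_smul_haarAddCircle]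
        simp
      exact absurd hzero (ne_of_gt hpos)
    obtain ⟨y, hy⟩ := hex
    have h6 := hgreedy (n+1) (by omega) y
    simp only [Nat.add_sub_cancel] at h6
    exact le_trans h6 hy
  -- energy increases by at most f 0 at each step
  have hstep : ∀ n : ℕ, M ≤ n → E (n+1) ≤ E n + f 0 := by
    intro n hn
    have hsplit : Finset.Icc 1 (n+1) = insert (n+1) (Finset.Icc 1 n) := by
      ext m; simp only [Finset.mem_Icc, Finset.mem_insert]; omega
    have hnot : (n+1) ∉ Finset.Icc 1 n := by simp
    have expand : E (n+1) = f 0 + (∑ kk ∈ Finset.Icc 1 n, f (x (n+1) - x kk))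
        + ((∑ m ∈ Finset.Icc 1 n, f (x m - x (n+1))) + E n) := by
      simp only [hE, hsplit, Finset.sum_insert hnot, Finset.sum_add_distrib, sub_self]
      try ring
    have heven' : ∑ m ∈ Finset.Icc 1 n, f (x m - x (n+1))
        = ∑ m ∈ Finset.Icc 1 n, f (x (n+1) - x m) :=
      Finset.sum_congr rfl fun m _ => by rw [← hf_even (x (n+1) - x m), neg_sub]
    have hd := hD n hn
    rw [expand, heven']
    linarith
  set C : ℝ := max (E M - M * f 0) 0 with hCdef
  have hCge : (0:ℝ) ≤ C := le_max_right _ _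
  have hEn : ∀ n : ℕ, M ≤ n → E n ≤ n * f 0 + C := by
    intro n hn
    induction n, hn using Nat.le_induction with
    | base =>
        have h7 : E M - M * f 0 ≤ C := le_max_left _ _
        linarith
    | succ n hn ih =>
        have h8 := hstep n hn
        push_cast
        push_cast at ih
        linarith
  refine ⟨C, hCge, ?_⟩
  intro k hk hkpos n hn
  rw [le_div_iff₀ hkpos]
  calc ‖∑ m ∈ Finset.Icc 1 n, fourier k (x m)‖ ^ 2 * (c k).re
      = (c k).re * ‖∑ m ∈ Finset.Icc 1 n, fourier k (x m)‖ ^ 2 := mul_comm _ _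
    _ ≤ E n := key n k
    _ ≤ (n : ℝ) * f 0 + C := hEn n hn
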